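/- Let $p \geq 4$, $c_p = 1 + \frac{4}{\log(p-1)}$. Then $\phi(c_p) := \sum_{k=1}^\infty (p-1)^{1 - c_p k}(1+k)^{2 - 6/p} \leq 1$. -/

import Mathlib

/-- For `p ≥ 4` and `c_p = 1 + 4/log(p-1)`:
`∑_{k≥1} (p-1)^{1 - c_p k} (1+k)^{2-6/p} ≤ 1`. -/
theorem stmt17 (p : ℝ) (hp : 4 ≤ p) :
    ∑' k : ℕ, (p - 1) ^ (1 - (1 + 4 / Real.log (p - 1)) * ((k : ℝ) + 1)) *
        (1 + ((k : ℝ) + 1)) ^ (2 - 6 / p) ≤ 1 := by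
  set c : ℝ := 1 + 4 / Real.log (p - 1) with hc
  have hq0 : (0:ℝ) < p - 1 := by linarith
  have hq3 : (3:ℝ) ≤ p - 1 := by linarith
  have hq1 : (1:ℝ) < p - 1 := by linarith
  have hlq : 0 < Real.log (p - 1) := Real.log_pos hq1
  have hexp4 : (9:ℝ) ≤ Real.exp 4 := by
    have h2 : (3:ℝ) ≤ Real.exp 2 := by
      have := Real.add_one_le_exp (2:ℝ); linarith
    have : Real.exp 4 = Real.exp 2 * Real.exp 2 := by
      rw [← Real.exp_add]; norm_num
    nlinarith
  have hexpneg : Real.exp (-4) ≤ 1/9 := by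
    rw [Real.exp_neg]
    rw [inv_le_comm₀ (by linarith) (by norm_num)]
    linarith
  have hexpneg0 : 0 < Real.exp (-4) := Real.exp_pos _
  set r : ℝ := 4 * Real.exp (-4) / (p - 1) with hr
  have hr0 : 0 ≤ r := by positivity
  have hr1 : r ≤ 4/27 := by
    rw [hr, div_le_iff₀ hq0]
    nlinarith
  -- key rewrite of the rpow factor
  have hkey : ∀ k : ℕ, (p - 1) ^ (1 - c * ((k : ℝ) + 1))
      = (p - 1) * (Real.exp (-4) / (p - 1)) ^ (k + 1) := by
    intro k
    have e1 : (p - 1) ^ ((-c) * ((k:ℕ)+1 : ℕ)) = ((p - 1) ^ (-c)) ^ (k + 1) := by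
      rw [Real.rpow_mul hq0.le, Real.rpow_natCast]
    have e2 : (p - 1) ^ (-c) = Real.exp (-4) / (p - 1) := by
      rw [Real.rpow_def_of_pos hq0]
      have : Real.log (p - 1) * (-c) = -4 + (- Real.log (p - 1)) := by
        rw [hc]; field_simp; try ring
      rw [this, Real.exp_add, Real.exp_neg (Real.log (p - 1)), Real.exp_log hq0]
      ring
    have e3 : 1 - c * ((k : ℝ) + 1) = 1 + (-c) * ((k:ℕ)+1 : ℕ) := by
      push_cast; ring
    rw [e3, Real.rpow_add hq0, Real.rpow_one, e1, e2]
  -- bound on the polynomial factor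
  have hpoly : ∀ k : ℕ, (1 + ((k : ℝ) + 1)) ^ (2 - 6 / p) ≤ (4:ℝ) ^ (k + 1) := by
    intro k
    have hp0 : (0:ℝ) < p := by linarith
    have he0 : 0 ≤ 2 - 6 / p := by
      have : 6 / p ≤ 6 / 4 := by
        apply div_le_div_of_nonneg_left (by norm_num) (by norm_num) hp
      linarith
    have he2 : 2 - 6 / p ≤ 2 := by
      have : 0 ≤ 6 / p := by positivity
      linarith
    have hbase : (1 + ((k : ℝ) + 1)) ≤ (2:ℝ) ^ (k + 1) := by
      have := Nat.lt_two_pow_self (n := k + 1)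
      have : ((k:ℝ) + 1) + 1 ≤ ((2:ℕ) ^ (k+1) : ℕ) := by exact_mod_cast this
      push_cast at this
      linarith
    calc (1 + ((k : ℝ) + 1)) ^ (2 - 6 / p)
        ≤ ((2:ℝ) ^ (k + 1)) ^ (2 - 6 / p) := by
          apply Real.rpow_le_rpow (by positivity) hbase he0
      _ ≤ ((2:ℝ) ^ (k + 1)) ^ (2:ℝ) := by
          apply Real.rpow_le_rpow_of_exponent_le (one_le_pow₀ (by norm_num)) he2
      _ = (4:ℝ) ^ (k + 1) := by
          rw [Real.rpow_two, ← pow_mul, show (k+1)*2 = 2*(k+1) from by ring, pow_mul]; norm_num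
  -- pointwise bound
  have hfg : ∀ k : ℕ, (p - 1) ^ (1 - c * ((k : ℝ) + 1)) * (1 + ((k : ℝ) + 1)) ^ (2 - 6 / p)
      ≤ (p - 1) * r ^ (k + 1) := by
    intro k
    rw [hkey k]
    have h1 : (0:ℝ) ≤ (p - 1) * (Real.exp (-4) / (p - 1)) ^ (k + 1) := by positivity
    have h2 := hpoly k
    have h3 : (p - 1) * (Real.exp (-4) / (p - 1)) ^ (k + 1) * (4:ℝ) ^ (k + 1)
        = (p - 1) * r ^ (k + 1) := by
      rw [hr, mul_assoc, ← mul_pow]; ring_nf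
    calc (p - 1) * (Real.exp (-4) / (p - 1)) ^ (k + 1) * (1 + ((k : ℝ) + 1)) ^ (2 - 6 / p)
        ≤ (p - 1) * (Real.exp (-4) / (p - 1)) ^ (k + 1) * (4:ℝ) ^ (k + 1) := by
          apply mul_le_mul_of_nonneg_left h2 h1
      _ = (p - 1) * r ^ (k + 1) := h3
  have hf0 : ∀ k : ℕ, 0 ≤ (p - 1) ^ (1 - c * ((k : ℝ) + 1)) * (1 + ((k : ℝ) + 1)) ^ (2 - 6 / p) := by
    intro k; positivity
  have hrlt1 : r < 1 := by linarith
  have hgsum : Summable (fun k : ℕ => (p - 1) * r ^ (k + 1)) := by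
    have : Summable (fun k : ℕ => r ^ k) := summable_geometric_of_lt_one hr0 hrlt1
    exact ((this.mul_left r).mul_left (p-1)).congr (fun k => by ring)
  have hfsum : Summable (fun k : ℕ => (p - 1) ^ (1 - c * ((k : ℝ) + 1)) *
      (1 + ((k : ℝ) + 1)) ^ (2 - 6 / p)) :=
    Summable.of_nonneg_of_le hf0 hfg hgsum
  have hle := Summable.tsum_le_tsum hfg hfsum hgsum
  have hgval : ∑' k : ℕ, (p - 1) * r ^ (k + 1) = (p - 1) * r * (1 - r)⁻¹ := by
    have : ∑' k : ℕ, (p - 1) * r ^ (k + 1) = ∑' k : ℕ, ((p - 1) * r) * r ^ k := by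
      apply tsum_congr; intro k; ring
    rw [this, tsum_mul_left, tsum_geometric_of_lt_one hr0 hrlt1]
  have hfinal : (p - 1) * r * (1 - r)⁻¹ ≤ 1 := by
    have h1r : 0 < 1 - r := by linarith
    rw [mul_inv_le_iff₀ h1r, one_mul]
    have hqr : (p - 1) * r = 4 * Real.exp (-4) := by
      rw [hr]; field_simp
    rw [hqr]
    linarith
  calc _ ≤ ∑' k : ℕ, (p - 1) * r ^ (k + 1) := hle
    _ = (p - 1) * r * (1 - r)⁻¹ := hgval
    _ ≤ 1 := hfinal
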